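/- Fix a real β > 0. For every x with 0 < x < 1, the dual potential of the (d_l=3, d_r=4, d_g=3) precoded-rateless code satisfies U⊥(x, x₂⊥(x); ε⊥(x)) > 0, where U⊥(x₁,x₂;ε) = 3/β − (3/β)(1−x₁)³·e^{−βx₂} − (9/(4β))·(1 − (1−x₁)²·e^{−βx₂})⁴ − ε·(1 − (1−x₁)³·e^{−βx₂})³ − (9/β)·x₁(1−x₁)²·e^{−βx₂} − 3·x₂(1−x₁)³·e^{−βx₂}, x₂⊥(x) = −(1/β)·ln((1 − x^{1/3})/(1 − x)²), and ε⊥(x) = x₂⊥(x)/(1 − (1−x)³·exp(−β·x₂⊥(x)))². -/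

import Mathlib

section AuxLemmas

private lemma aux_log_sub' (t : ℝ) (ht0 : 0 ≤ t) (ht1 : t < 1) :
    Real.log (1-t) ≤ -t - t^2/2 - t^3/3 - t^4/4 := by
  set g : ℝ → ℝ := fun v => -v - v^2/2 - v^3/3 - v^4/4 - Real.log (1-v) with hg
  have hder : ∀ v : ℝ, 0 ≤ v → v < 1 → HasDerivAt g (-(1 + v + v^2 + v^3) + 1/(1-v)) v := by
    intro v hv0 hv1
    have h1 : (0:ℝ) < 1 - v := by linarith
    have hlog : HasDerivAt (fun y : ℝ => Real.log (1-y)) (-(1/(1-v))) v := by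
      have := ((hasDerivAt_id v).const_sub 1).log h1.ne'
      refine this.congr_deriv ?_
      simp only [id_eq]
      ring
    have hpoly : HasDerivAt (fun y : ℝ => -y - y^2/2 - y^3/3 - y^4/4)
        (-(1 + v + v^2 + v^3)) v := by
      have h2 := ((hasDerivAt_pow 2 v).div_const 2)
      have h3 := ((hasDerivAt_pow 3 v).div_const 3)
      have h4 := ((hasDerivAt_pow 4 v).div_const 4)
      have := (((hasDerivAt_id v).neg.sub h2).sub h3).sub h4
      refine this.congr_deriv ?_
      push_cast
      ring
    have := hpoly.sub hlog
    refine this.congr_deriv ?_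
    ring
  have hmono : MonotoneOn g (Set.Ico 0 1) := by
    apply monotoneOn_of_deriv_nonneg (convex_Ico 0 1)
    · intro v hv
      exact ((hder v hv.1 hv.2).continuousAt).continuousWithinAt
    · intro v hv
      rw [interior_Ico] at hv
      exact ((hder v (le_of_lt hv.1) hv.2).differentiableAt).differentiableWithinAt
    · intro v hv
      rw [interior_Ico] at hv
      rw [(hder v (le_of_lt hv.1) hv.2).deriv]
      have h1 : (0:ℝ) < 1 - v := by linarith [hv.2]
      have hv' : (0:ℝ) < v := hv.1
      have : -(1 + v + v^2 + v^3) + 1/(1-v) = v^4/(1-v) := by field_simp; ring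
      rw [this]
      exact div_nonneg (by positivity) h1.le
  have := hmono (Set.mem_Ico.mpr ⟨le_refl 0, one_pos⟩) (Set.mem_Ico.mpr ⟨ht0, ht1⟩) ht0
  simp [hg] at this
  linarith [this]

private lemma aux_log_low' (t : ℝ) (ht0 : 0 ≤ t) (ht1 : t < 1) :
    -(t + t^2/2 + t^3/3 + t^4/4) - t^5/(5*(1-t)) ≤ Real.log (1-t) := by
  set g : ℝ → ℝ := fun v => Real.log (1-v) + (v + v^2/2 + v^3/3 + v^4/4) + v^5/(5*(1-v))
    with hg
  have hder : ∀ v : ℝ, 0 ≤ v → v < 1 → HasDerivAt g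
      (-(1/(1-v)) + (1 + v + v^2 + v^3)
        + (5*v^4*(5*(1-v)) - v^5*(-5))/(5*(1-v))^2) v := by
    intro v hv0 hv1
    have h1 : (0:ℝ) < 1 - v := by linarith
    have hlog : HasDerivAt (fun y : ℝ => Real.log (1-y)) (-(1/(1-v))) v := by
      have := ((hasDerivAt_id v).const_sub 1).log h1.ne'
      refine this.congr_deriv ?_
      simp only [id_eq]
      ring
    have hpoly : HasDerivAt (fun y : ℝ => y + y^2/2 + y^3/3 + y^4/4)
        (1 + v + v^2 + v^3) v := by
      have h2 := ((hasDerivAt_pow 2 v).div_const 2)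
      have h3 := ((hasDerivAt_pow 3 v).div_const 3)
      have h4 := ((hasDerivAt_pow 4 v).div_const 4)
      have := (((hasDerivAt_id v).add h2).add h3).add h4
      refine this.congr_deriv ?_
      push_cast
      ring
    have hden : HasDerivAt (fun y : ℝ => 5*(1-y)) (-5 : ℝ) v := by
      have := ((hasDerivAt_id v).const_sub 1).const_mul (5:ℝ)
      refine this.congr_deriv ?_
      ring
    have hrat : HasDerivAt (fun y : ℝ => y^5/(5*(1-y)))
        ((5*v^4*(5*(1-v)) - v^5*(-5))/(5*(1-v))^2) v := by
      have := (hasDerivAt_pow 5 v).div hden (by positivity)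
      refine this.congr_deriv ?_
      all_goals (push_cast; ring)
    exact (hlog.add hpoly).add hrat
  have hmono : MonotoneOn g (Set.Ico 0 1) := by
    apply monotoneOn_of_deriv_nonneg (convex_Ico 0 1)
    · intro v hv
      exact ((hder v hv.1 hv.2).continuousAt).continuousWithinAt
    · intro v hv
      rw [interior_Ico] at hv
      exact ((hder v (le_of_lt hv.1) hv.2).differentiableAt).differentiableWithinAt
    · intro v hv
      rw [interior_Ico] at hv
      rw [(hder v (le_of_lt hv.1) hv.2).deriv]
      have h1 : (0:ℝ) < 1 - v := by linarith [hv.2]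
      have hv' : (0:ℝ) < v := hv.1
      have : -(1/(1-v)) + (1 + v + v^2 + v^3)
          + (5*v^4*(5*(1-v)) - v^5*(-5))/(5*(1-v))^2 = v^5/(5*(1-v)^2) := by
        field_simp
        ring
      rw [this]
      positivity
  have := hmono (Set.mem_Ico.mpr ⟨le_refl 0, one_pos⟩) (Set.mem_Ico.mpr ⟨ht0, ht1⟩) ht0
  simp [hg] at this
  linarith [this]

private lemma log_three_le' : Real.log 3 ≤ 452/405 := by
  have h := aux_log_low' (2/3) (by norm_num) (by norm_num)
  have h13 : (1:ℝ) - 2/3 = 3⁻¹ := by norm_num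
  rw [h13, Real.log_inv] at h
  norm_num at h ⊢
  linarith

private lemma polyI' (t : ℝ) (h0 : 0 < t) (h85 : t ≤ 17/20) :
    0 < 5/2*t^2 - 5/2*t^3 + 25/3*t^4 - 83/6*t^5 - 13/6*t^6 + 95/6*t^7
      - 29/3*t^8 - 19/2*t^9 + 20*t^10 - 10*t^11 := by
  nlinarith [sq_nonneg t, sq_nonneg (1-t), mul_pos h0 h0, sq_nonneg (t*(1-t)),
    sq_nonneg (t^2*(1-t)), sq_nonneg (t^3*(1-t)), sq_nonneg (t^4*(1-t)),
    pow_pos h0 5, pow_pos h0 9,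
    mul_pos (pow_pos h0 9) (sub_pos.mpr (lt_of_le_of_lt h85 (by norm_num : (17:ℝ)/20 < 1))),
    sq_nonneg (t^4*(17/20-t)), sq_nonneg (t^3*(17/20-t))]

private lemma polyII' (t : ℝ) (h85 : 17/20 ≤ t) (h1 : t < 1) :
    0 < -904/135 + 4238/405*t - 1/2*t^2 - 622/405*t^3 - 2131/810*t^4
      + 1/2*t^5 + 1/3*t^6 + 1/6*t^7 + 1/2*t^8 := by
  nlinarith [sq_nonneg (1-t), sq_nonneg (t-17/20),
    mul_nonneg (sub_nonneg.mpr h85) (sub_pos.mpr h1).le, sq_nonneg ((1-t)*(t-17/20)),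
    mul_nonneg (mul_nonneg (sub_nonneg.mpr h85) (sub_nonneg.mpr h85)) (sub_pos.mpr h1).le,
    mul_nonneg (mul_nonneg (sub_nonneg.mpr h85) (sub_pos.mpr h1).le) (sub_pos.mpr h1).le]

end AuxLemmas

/-- Potential function of the dual of the `(d_l = 3, d_r = 4, d_g = 3)`
precoded-rateless code with parameter `β > 0`. -/
noncomputable def dualPotential343 (β x₁ x₂ ε : ℝ) : ℝ :=
  3/β - (3/β) * (1 - x₁)^3 * Real.exp (-β*x₂)
    - (9/(4*β)) * (1 - (1 - x₁)^2 * Real.exp (-β*x₂))^4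
    - ε * (1 - (1 - x₁)^3 * Real.exp (-β*x₂))^3
    - (9/β) * x₁ * (1 - x₁)^2 * Real.exp (-β*x₂)
    - 3 * x₂ * (1 - x₁)^3 * Real.exp (-β*x₂)

/-- Second coordinate of the nontrivial DE fixed points of the dual code. -/
noncomputable def x₂perp343 (β x : ℝ) : ℝ :=
  -(1/β) * Real.log ((1 - x ^ ((1:ℝ)/3)) / (1 - x)^2)

/-- Erasure-probability coordinate of the nontrivial DE fixed points of the dual code. -/
noncomputable def εperp343 (β x : ℝ) : ℝ :=
  x₂perp343 β x / (1 - (1 - x)^3 * Real.exp (-β * x₂perp343 β x))^2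

set_option maxHeartbeats 1600000 in
theorem stmt_11 (β : ℝ) (hβ : 0 < β) (x : ℝ) (hx0 : 0 < x) (hx1 : x < 1) :
    0 < dualPotential343 β x (x₂perp343 β x) (εperp343 β x) := by
  set t : ℝ := x ^ ((1:ℝ)/3) with htdef
  have ht0 : 0 < t := Real.rpow_pos_of_pos hx0 _
  have ht1 : t < 1 := Real.rpow_lt_one hx0.le hx1 (by norm_num)
  have htx : t^3 = x := by
    rw [htdef, ← Real.rpow_natCast (x ^ ((1:ℝ)/3)) 3, ← Real.rpow_mul hx0.le]
    norm_num
  have h1t : (0:ℝ) < 1 - t := by linarith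
  have h1x : (0:ℝ) < 1 - x := by linarith
  have hfac : 1 - x = (1-t)*(1+t+t^2) := by rw [← htx]; ring
  have hs : (0:ℝ) < 1 + t + t^2 := by positivity
  set u : ℝ := (1-t)/(1-x)^2 with hudef
  have hu : 0 < u := by positivity
  have hE : Real.exp (-β * x₂perp343 β x) = u := by
    rw [x₂perp343, ← htdef, ← hudef]
    have : -β * (-(1/β) * Real.log u) = Real.log u := by field_simp
    rw [this, Real.exp_log hu]
  set L : ℝ := Real.log (1-t) + 2*Real.log (1+t+t^2) with hLdef
  have hx2 : x₂perp343 β x = L/β := by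
    rw [x₂perp343, ← htdef, ← hudef]
    rw [hudef, Real.log_div h1t.ne' (by positivity), Real.log_pow, hfac,
      Real.log_mul h1t.ne' hs.ne']
    rw [hLdef]; push_cast; field_simp; ring
  have hA2 : (1-x)^2 * u = 1 - t := by
    rw [hudef]; field_simp
  have hA3 : (1-x)^3 * u = (1-x)*(1-t) := by
    rw [hudef]; field_simp
  set D : ℝ := 1 - (1-x)*(1-t) with hDdef
  have hD : 0 < D := by nlinarith
  have hεval : εperp343 β x = (L/β) / D^2 := by
    rw [εperp343, hE, hx2, hA3, hDdef]
  have hU : dualPotential343 β x (x₂perp343 β x) (εperp343 β x)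
      = (1/β) * ((3*t - 6*t^3 + 15/4*t^4) - L * (3 - 2*t - 2*t^3 + 2*t^4)) := by
    rw [dualPotential343, hE, hx2, hεval]
    have e2 : 1 - (1-x)^2 * u = t := by rw [hA2]; ring
    have e3 : 1 - (1-x)^3 * u = D := by rw [hA3, hDdef]
    have hrw : ∀ c : ℝ, c * (1-x)^3 * u = c * ((1-x)*(1-t)) := by
      intro c; rw [mul_assoc, hA3]
    calc 3/β - 3/β * (1-x)^3 * u - 9/(4*β) * (1 - (1-x)^2*u)^4
          - L/β/D^2 * (1 - (1-x)^3*u)^3 - 9/β * x * (1-x)^2*u - 3*(L/β)*(1-x)^3*u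
        = 3/β - 3/β * ((1-x)*(1-t)) - 9/(4*β) * t^4
          - L/β/D^2 * D^3 - 9/β * x * (1-t) - 3*(L/β)*((1-x)*(1-t)) := by
          rw [e2, e3, hrw, hrw]
          have : 9/β * x * (1-x)^2*u = 9/β * x * (1-t) := by
            rw [mul_assoc, hA2]
          rw [this]
      _ = 3/β - 3/β * ((1-x)*(1-t)) - 9/(4*β) * t^4
          - (L/β) * D - 9/β * x * (1-t) - 3*(L/β)*((1-x)*(1-t)) := by
          have hcancel : L/β/D^2 * D^3 = (L/β) * D := by
            field_simp
          rw [hcancel]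
      _ = (1/β) * ((3*t - 6*t^3 + 15/4*t^4) - L * (3 - 2*t - 2*t^3 + 2*t^4)) := by
          rw [hDdef, ← htx]
          field_simp
          ring
    done
  rw [hU]
  apply mul_pos (by positivity)
  have hQ : (0:ℝ) < 3 - 2*t - 2*t^3 + 2*t^4 := by nlinarith
  rcases le_or_gt t (17/20) with hc | hc
  · -- Region I : t ≤ 17/20
    have hLalt : L = 2*Real.log (1-t^3) - Real.log (1-t) := by
      have h122 : (1:ℝ)+t+t^2 = (1-t^3)/(1-t) := by field_simp; ring
      rw [hLdef, h122, Real.log_div (by nlinarith) h1t.ne']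
      ring
    have ht31 : t^3 < 1 := by nlinarith
    have ha := aux_log_sub' (t^3) (by positivity) ht31
    have hb := aux_log_low' t ht0.le ht1
    have hLB : L ≤ -2*t^3 - t^6 + t + t^2/2 + t^3/3 + t^4/4 + t^5/(5*(1-t)) := by
      rw [hLalt]
      nlinarith [pow_nonneg ht0.le 9, pow_nonneg ht0.le 12, ha, hb]
    have hkey : (0:ℝ) < (3*t - 6*t^3 + 15/4*t^4)
        - (-2*t^3 - t^6 + t + t^2/2 + t^3/3 + t^4/4 + t^5/(5*(1-t)))
          * (3 - 2*t - 2*t^3 + 2*t^4) := by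
      have h5 : (0:ℝ) < 5*(1-t) := by linarith
      have heq : (3*t - 6*t^3 + 15/4*t^4)
          - (-2*t^3 - t^6 + t + t^2/2 + t^3/3 + t^4/4 + t^5/(5*(1-t)))
            * (3 - 2*t - 2*t^3 + 2*t^4)
          = (5/2*t^2 - 5/2*t^3 + 25/3*t^4 - 83/6*t^5 - 13/6*t^6 + 95/6*t^7
              - 29/3*t^8 - 19/2*t^9 + 20*t^10 - 10*t^11) / (5*(1-t)) := by
        field_simp
        ring
      rw [heq]
      exact div_pos (polyI' t ht0 hc) h5
    linarith [mul_le_mul_of_nonneg_right hLB hQ.le, hkey]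
  · -- Region II : t ≥ 17/20
    have hL1 := aux_log_sub' t ht0.le ht1
    have hs3 : Real.log (1+t+t^2) ≤ Real.log 3 :=
      Real.log_le_log (by positivity) (by nlinarith)
    have hLB : L ≤ -t - t^2/2 - t^3/3 - t^4/4 + 904/405 := by
      rw [hLdef]
      have := log_three_le'
      linarith
    have hkey := polyII' t hc.le ht1
    linarith [mul_le_mul_of_nonneg_right hLB hQ.le, hkey]
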